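/- Let n ≥ 3 be an integer, ℓ > 0, r₀ > 0, a ∈ ℝ, r₊ > 0, and define V : (0,∞) → ℝ by V(r) = (r²/ℓ²)(1 + a/r^{n−1} − r₀ⁿ/rⁿ), assumed positive on (r₊, ∞). Then lim_{r→∞} rⁿ·(r/ℓ)·(d/dr)[ r²/(ℓ²V(r)) + ℓ²V(r)/r² ] = 0; i.e., the term ∇̌₁tr_ğ(g) = (r/ℓ)∂_r(r²/(ℓ²V) + ℓ²V/r² + n − 2) is o(r^{−n}) as r → ∞. -/

import Mathlib

open Filter Topology

set_option maxHeartbeats 1000000 in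
/-- the trace term ∇̌₁tr_ğ(g) = (r/ℓ)∂_r(r²/(ℓ²V) + ℓ²V/r² + n − 2)
is o(r^{−n}) as r → ∞, i.e. rⁿ·(r/ℓ)·(d/dr)[r²/(ℓ²V) + ℓ²V/r²] → 0. -/
theorem stmt_14 (n : ℕ) (hn : 3 ≤ n) (ℓ r₀ : ℝ) (hℓ : 0 < ℓ) (hr₀ : 0 < r₀) (a : ℝ)
    (rp : ℝ) (hrp : 0 < rp)
    (V : ℝ → ℝ)
    (hV : ∀ r > (0 : ℝ), V r = r ^ 2 / ℓ ^ 2 * (1 + a / r ^ (n - 1) - r₀ ^ n / r ^ n))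
    (hVpos : ∀ r > rp, 0 < V r) :
    Tendsto (fun r => r ^ n * (r / ℓ) *
        deriv (fun s => s ^ 2 / (ℓ ^ 2 * V s) + ℓ ^ 2 * V s / s ^ 2) r) atTop
      (nhds 0) := by
  obtain ⟨k, rfl⟩ : ∃ k, n = k + 3 := ⟨n - 3, by omega⟩
  obtain ⟨g, hgdef⟩ : ∃ g : ℝ → ℝ,
      g = fun s => 1 + a * (s ^ (k+2))⁻¹ - r₀ ^ (k+3) * (s ^ (k+3))⁻¹ := ⟨_, rfl⟩
  obtain ⟨gd, hgddef⟩ : ∃ gd : ℝ → ℝ,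
      gd = fun s => a * (-(((k:ℝ)+2) * s ^ (k+1)) / (s ^ (k+2)) ^ 2)
        - r₀ ^ (k+3) * (-(((k:ℝ)+3) * s ^ (k+2)) / (s ^ (k+3)) ^ 2) := ⟨_, rfl⟩
  obtain ⟨M, hMdef⟩ : ∃ M : ℝ → ℝ,
      M = fun r => (-(a * ((k:ℝ)+2)) + ((k:ℝ)+3) * r₀ ^ (k+3) * r⁻¹)
        * (a - r₀ ^ (k+3) * r⁻¹) * (r ^ (k+1))⁻¹ := ⟨_, rfl⟩
  obtain ⟨L, hLdef⟩ : ∃ L : ℝ → ℝ,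
      L = fun r => (1/ℓ) * M r * ((g r + 1) / (g r) ^ 2) := ⟨_, rfl⟩
  -- V in terms of g
  have hVg : ∀ s : ℝ, 0 < s → V s = s ^ 2 / ℓ ^ 2 * g s := by
    intro s hs
    rw [hV s hs, hgdef]
    simp [div_eq_mul_inv]
  have hgpos : ∀ s : ℝ, max rp 1 < s → 0 < g s := by
    intro s hs
    have hs0 : (0:ℝ) < s := lt_trans one_pos (lt_of_le_of_lt (le_max_right _ _) hs)
    have h := hVpos s (lt_of_le_of_lt (le_max_left _ _) hs)
    rw [hVg s hs0] at h
    have hq : (0:ℝ) < s ^ 2 / ℓ ^ 2 := by positivity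
    have := div_pos h hq
    rwa [mul_div_cancel_left₀ _ hq.ne'] at this
  -- limits
  have hinv : ∀ j : ℕ, 1 ≤ j → Tendsto (fun r : ℝ => (r ^ j)⁻¹) atTop (nhds 0) := by
    intro j hj
    exact (tendsto_pow_atTop (by omega)).inv_tendsto_atTop
  have hg1 : Tendsto g atTop (nhds 1) := by
    rw [hgdef]
    have := ((tendsto_const_nhds (α := ℝ) (x := (1:ℝ))).add
        ((hinv (k+2) (by omega)).const_mul a)).sub
      ((hinv (k+3) (by omega)).const_mul (r₀ ^ (k+3)))
    simpa using this
  have hB : Tendsto (fun r => (g r + 1) / (g r) ^ 2) atTop (nhds 2) := by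
    have := (hg1.add (tendsto_const_nhds (α := ℝ) (x := (1:ℝ)))).div (hg1.pow 2) (by norm_num)
    have h2 : (1:ℝ) + 1 = 2 := by norm_num
    simpa [Pi.div_def, h2] using this
  have hM : Tendsto M atTop (nhds 0) := by
    rw [hMdef]
    have t1 : Tendsto (fun r : ℝ => -(a * ((k:ℝ)+2)) + ((k:ℝ)+3) * r₀ ^ (k+3) * r⁻¹)
        atTop (nhds (-(a * ((k:ℝ)+2)))) := by
      have := (tendsto_const_nhds (α := ℝ) (x := -(a * ((k:ℝ)+2)))).add
        (tendsto_inv_atTop_zero.const_mul (((k:ℝ)+3) * r₀ ^ (k+3)))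
      simpa [mul_assoc] using this
    have t2 : Tendsto (fun r : ℝ => a - r₀ ^ (k+3) * r⁻¹) atTop (nhds a) := by
      have := (tendsto_const_nhds (α := ℝ) (x := a)).sub
        (tendsto_inv_atTop_zero.const_mul (r₀ ^ (k+3)))
      simpa using this
    have := (t1.mul t2).mul (hinv (k+1) (by omega))
    simpa using this
  have hL : Tendsto L atTop (nhds 0) := by
    rw [hLdef]
    have := ((tendsto_const_nhds (α := ℝ) (x := 1/ℓ)).mul hM).mul hB
    simpa using this
  -- eventual equality
  have hev : (fun r => r ^ (k+3) * (r / ℓ) *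
        deriv (fun s => s ^ 2 / (ℓ ^ 2 * V s) + ℓ ^ 2 * V s / s ^ 2) r) =ᶠ[atTop] L := by
    filter_upwards [eventually_gt_atTop (max rp 1)] with r hr
    have hr0 : (0:ℝ) < r := lt_trans one_pos (lt_of_le_of_lt (le_max_right _ _) hr)
    have hG : 0 < g r := hgpos r hr
    have heq : Set.EqOn (fun s => s ^ 2 / (ℓ ^ 2 * V s) + ℓ ^ 2 * V s / s ^ 2)
        (fun s => (g s)⁻¹ + g s) (Set.Ioi (max rp 1)) := by
      intro s hs
      have hs0 : (0:ℝ) < s := lt_trans one_pos (lt_of_le_of_lt (le_max_right _ _) hs)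
      have hgs : 0 < g s := hgpos s hs
      simp only
      rw [hVg s hs0]
      field_simp
    have hp2 : HasDerivAt (fun s : ℝ => s ^ (k+2)) (((k:ℝ)+2) * r ^ (k+1)) r := by
      have := hasDerivAt_pow (k+2) r
      push_cast at this
      exact this
    have hp3 : HasDerivAt (fun s : ℝ => s ^ (k+3)) (((k:ℝ)+3) * r ^ (k+2)) r := by
      have := hasDerivAt_pow (k+3) r
      push_cast at this
      exact this
    have hgd : HasDerivAt g (gd r) r := by
      have h2 := (hp2.inv (pow_ne_zero _ hr0.ne')).const_mul a
      have h3 := (hp3.inv (pow_ne_zero _ hr0.ne')).const_mul (r₀ ^ (k+3))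
      have := (h2.const_add 1).sub h3
      rw [hgdef, hgddef]
      exact this
    have hF : HasDerivAt (fun s => (g s)⁻¹ + g s) (-(gd r) / (g r) ^ 2 + gd r) r :=
      (hgd.inv hG.ne').add hgd
    have hder : deriv (fun s => s ^ 2 / (ℓ ^ 2 * V s) + ℓ ^ 2 * V s / s ^ 2) r
        = -(gd r) / (g r) ^ 2 + gd r := by
      have hmem : Set.Ioi (max rp 1) ∈ nhds r := isOpen_Ioi.mem_nhds hr
      have hee : (fun s => s ^ 2 / (ℓ ^ 2 * V s) + ℓ ^ 2 * V s / s ^ 2)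
          =ᶠ[nhds r] (fun s => (g s)⁻¹ + g s) := eventuallyEq_of_mem hmem heq
      rw [hee.deriv_eq, hF.deriv]
    rw [hder]
    have key : r ^ (k+3) * r * gd r * (g r - 1) = M r := by
      rw [hgdef, hgddef, hMdef]
      simp only
      field_simp
      ring
    have step : r ^ (k+3) * (r / ℓ) * (-(gd r) / (g r) ^ 2 + gd r)
        = (1/ℓ) * (r ^ (k+3) * r * gd r * (g r - 1)) * ((g r + 1) / (g r) ^ 2) := by
      field_simp
      ring
    rw [step, key, hLdef]
  exact Tendsto.congr' hev.symm hL
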